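/- Let ρ > 0, X ⊆ R^n, f : X → R, h : X → R^m, and define L_ρ(x, λ) := f(x) + (ρ/2) d²(λ/ρ + h(x), R^m_−) − ‖λ‖²/(2ρ). Suppose x_i ∈ X satisfies L_ρ(x_i, λ_i) ≤ L_ρ(x*, λ_i) + α_i for a point x* with h(x*) ≤ 0, and set λ_{i+1} := λ_i + ρ∇_λ L_ρ(x_i, λ_i), which satisfies d(h(x_i) + λ_i/ρ, R^m_−) = ‖λ_{i+1}‖/ρ. Then f(x_i) − f(x*) ≤ (1/(2ρ))(‖λ_i‖² − ‖λ_{i+1}‖²) + α_i. -/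

import Mathlib

/-- One-step primal suboptimality inequality of the augmented Lagrangian method:
if `x_i` minimizes `L_ρ(·, λ_i)` within `α_i` relative to a feasible `x*`, and
`λ_{i+1}` satisfies `d(h(x_i) + λ_i/ρ, ℝ^m_−) = ‖λ_{i+1}‖/ρ`, then
`f(x_i) − f(x*) ≤ (1/(2ρ))(‖λ_i‖² − ‖λ_{i+1}‖²) + α_i`. -/
theorem one_step_primal_suboptimality (n m : ℕ) (ρ : ℝ) (hρ : 0 < ρ)
    (X : Set (EuclideanSpace ℝ (Fin n)))
    (f : EuclideanSpace ℝ (Fin n) → ℝ)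
    (h : EuclideanSpace ℝ (Fin n) → EuclideanSpace ℝ (Fin m))
    (L : EuclideanSpace ℝ (Fin n) → EuclideanSpace ℝ (Fin m) → ℝ)
    (hL : ∀ x lam, L x lam = f x +
      ρ / 2 * (Metric.infDist (ρ⁻¹ • lam + h x)
        {v : EuclideanSpace ℝ (Fin m) | ∀ i, v i ≤ 0}) ^ 2 - ‖lam‖ ^ 2 / (2 * ρ))
    (xi xstar : EuclideanSpace ℝ (Fin n)) (hxi : xi ∈ X) (hxstar : xstar ∈ X)
    (hfeas : ∀ j, h xstar j ≤ 0)
    (lami lami1 : EuclideanSpace ℝ (Fin m)) (αi : ℝ)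
    (hinexact : L xi lami ≤ L xstar lami + αi)
    (hupdate : Metric.infDist (h xi + ρ⁻¹ • lami)
        {v : EuclideanSpace ℝ (Fin m) | ∀ i, v i ≤ 0} = ‖lami1‖ / ρ) :
    f xi - f xstar ≤ (1 / (2 * ρ)) * (‖lami‖ ^ 2 - ‖lami1‖ ^ 2) + αi := by
  set K := {v : EuclideanSpace ℝ (Fin m) | ∀ i, v i ≤ 0} with hKdef
  have hK : h xstar ∈ K := hfeas
  have hd : Metric.infDist (ρ⁻¹ • lami + h xstar) K ≤ ‖lami‖ / ρ := by
    calc Metric.infDist (ρ⁻¹ • lami + h xstar) K ≤ dist (ρ⁻¹ • lami + h xstar) (h xstar) :=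
          Metric.infDist_le_dist_of_mem hK
      _ = ‖ρ⁻¹ • lami‖ := by rw [dist_eq_norm, add_sub_cancel_right]
      _ = ‖lami‖ / ρ := by
          rw [norm_smul, norm_inv, Real.norm_eq_abs, abs_of_pos hρ]; ring
  have hd0 : 0 ≤ Metric.infDist (ρ⁻¹ • lami + h xstar) K := Metric.infDist_nonneg
  rw [hL, hL] at hinexact
  rw [add_comm (h xi)] at hupdate
  rw [hupdate] at hinexact
  have hsq : (Metric.infDist (ρ⁻¹ • lami + h xstar) K) ^ 2 ≤ (‖lami‖ / ρ) ^ 2 :=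
    pow_le_pow_left₀ hd0 hd 2
  have hmul : ρ / 2 * (Metric.infDist (ρ⁻¹ • lami + h xstar) K) ^ 2 ≤
      ρ / 2 * (‖lami‖ / ρ) ^ 2 :=
    mul_le_mul_of_nonneg_left hsq (by positivity)
  have e1 : ρ / 2 * (‖lami1‖ / ρ) ^ 2 = ‖lami1‖ ^ 2 / (2 * ρ) := by
    field_simp
  have e2 : ρ / 2 * (‖lami‖ / ρ) ^ 2 = ‖lami‖ ^ 2 / (2 * ρ) := by
    field_simp
  have e3 : (1 / (2 * ρ)) * (‖lami‖ ^ 2 - ‖lami1‖ ^ 2) =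
      ‖lami‖ ^ 2 / (2 * ρ) - ‖lami1‖ ^ 2 / (2 * ρ) := by ring
  linarith
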